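/- arXiv:2302.07033 — 2 statements merged into one kernel-verified Lean document; each statement's English description precedes it below -/
import Mathlib

section
/- Let G be a graph with a clustering of terminal vertices such that any two terminals in different clusters Cᵢ, Cⱼ have distance at least L in G, and let G₁' be an induced subgraph of G with |V(G₁')| < L. For each i, let Sᵢ' be the set of vertices of a fixed set S' ⊆ V(G₁') connected in G₁' by a path to some vertex of Cᵢ ⊆ V(G₁'). Then the sets S₁',…,S_r' are pairwise disjoint. -/
open SimpleGraph

/-- The internal vertices of a walk (support minus the two endpoints). -/
def Internal {V : Type*} {G : SimpleGraph V} {u v : V} (p : G.Walk u v) : List V :=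
  p.support.tail.dropLast

/-- Two walks are internally vertex-disjoint if no vertex of one appears as an
internal vertex of the other. -/
def IntDisjoint {V : Type*} {G : SimpleGraph V} {a b c d : V}
    (p : G.Walk a b) (q : G.Walk c d) : Prop :=
  (∀ x ∈ p.support, x ∉ Internal q) ∧ (∀ x ∈ q.support, x ∉ Internal p)

/-- A topological minor model of `H` in `G`. -/
structure TopMinorModel {α β : Type*} (H : SimpleGraph α) (G : SimpleGraph β) where
  η : α → β
  inj : Function.Injective η
  path : ∀ ⦃u v : α⦄, H.Adj u v → G.Walk (η u) (η v)
  isPath : ∀ ⦃u v : α⦄ (h : H.Adj u v), (path h).IsPath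
  avoid : ∀ ⦃u v : α⦄ (h : H.Adj u v), ∀ x ∈ Internal (path h), ∀ w : α, x ≠ η w
  disj : ∀ ⦃u v u' v' : α⦄ (h : H.Adj u v) (h' : H.Adj u' v'),
    s(u, v) ≠ s(u', v') → IntDisjoint (path h) (path h')

/-- A separation of a graph `G`, given by the vertex sets of the two sides. -/
structure Separation {V : Type*} (G : SimpleGraph V) where
  A : Set V
  B : Set V
  cover : A ∪ B = Set.univ
  noEdge : ∀ a ∈ A \ B, ∀ b ∈ B \ A, ¬ G.Adj a b


/-- the sets of separator vertices reachable from distinct clusters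
inside a small induced subgraph are pairwise disjoint. -/
theorem stmt12 {V : Type*} (G : SimpleGraph V) (L : ℕ) (r : ℕ) (C : Fin r → Set V)
    (Y : Set V) (hYfin : Y.Finite) (hYcard : Y.ncard < L)
    (hCY : ∀ i, C i ⊆ Y)
    (hdist : ∀ i j, i ≠ j → ∀ u ∈ C i, ∀ v ∈ C j, ∀ p : G.Walk u v, L ≤ p.length)
    (S' : Set V) (hS' : S' ⊆ Y)
    (S : Fin r → Set V)
    (hS : ∀ i, S i = {v ∈ S' | ∃ c ∈ C i, ∃ p : G.Walk v c, p.IsPath ∧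
      ∀ x ∈ p.support, x ∈ Y}) :
    ∀ i j, i ≠ j → S i ∩ S j = ∅ := by
  classical
  intro i j hij
  ext v
  simp only [Set.mem_inter_iff, Set.mem_empty_iff_false, iff_false, not_and]
  intro hvi hvj
  rw [hS i] at hvi
  rw [hS j] at hvj
  obtain ⟨-, ci, hci, p, hp, hpY⟩ := hvi
  obtain ⟨-, cj, hcj, q, hq, hqY⟩ := hvj
  set w := (p.reverse.append q) with hw
  have hwY : ∀ x ∈ w.support, x ∈ Y := by
    intro x hx
    rw [hw, SimpleGraph.Walk.mem_support_append_iff] at hx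
    rcases hx with hx | hx
    · exact hpY x (by simpa using hx)
    · exact hqY x hx
  have hb := w.bypass_isPath
  have hbY : ∀ x ∈ w.bypass.support, x ∈ Y := fun x hx =>
    hwY x (w.support_bypass_subset hx)
  have hlen : L ≤ w.bypass.length := hdist i j hij ci hci cj hcj w.bypass
  have hsub : w.bypass.support.toFinset ⊆ hYfin.toFinset := by
    intro x hx
    rw [List.mem_toFinset] at hx
    exact hYfin.mem_toFinset.mpr (hbY x hx)
  have hcard : w.bypass.support.toFinset.card ≤ Y.ncard := by
    rw [Set.ncard_eq_toFinset_card _ hYfin]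
    exact Finset.card_le_card hsub
  rw [List.toFinset_card_of_nodup hb.support_nodup,
      SimpleGraph.Walk.length_support] at hcard
  omega
end

section
/- Let G be a graph, k ∈ ℕ, and let P₁,…,P_k be pairwise internally vertex-disjoint paths in G where Pᵢ joins sᵢ and tᵢ. Let X ⊆ V(G) induce one side of a separation (G[X], G₂) of G with separator S = X ∩ V(G₂). Define the auxiliary graph F* on the vertex set S ∩ ⋃ᵢ V(Pᵢ) where a,b are adjacent iff some Pᵢ has a subpath with endpoints a,b whose internal vertices all lie outside X. Then for every i with sᵢ,tᵢ ∈ X, the path Pᵢ induces an sᵢ–tᵢ path in the graph G[X] augmented with the edges of F*, and these induced paths (over all such i) are pairwise internally vertex-disjoint. -/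
open SimpleGraph

/-- The graph on the side X of a separation augmented with the edges of F. -/
def addEdges {V : Type*} (G : SimpleGraph V) (X : Set V) (F : SimpleGraph V) :
    SimpleGraph V where
  Adj u v := (G.Adj u v ∧ u ∈ X ∧ v ∈ X) ∨ F.Adj u v
  symm := by
    constructor
    intro u v h
    rcases h with ⟨h, hu, hv⟩ | h
    · exact Or.inl ⟨h.symm, hv, hu⟩
    · exact Or.inr h.symm
  loopless := by
    constructor
    intro u h
    rcases h with ⟨h, _, _⟩ | h
    · exact G.irrefl h
    · exact F.irrefl h

section Aux
variable {V : Type*} {G : SimpleGraph V} {X : Set V} {Fstar : SimpleGraph V}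

/-- Internal vertices as tail.dropLast; characterization for nodup support. -/
lemma mem_internal_iff {u v x : V} {p : G.Walk u v} (hp : p.support.Nodup) :
    x ∈ (p.support.tail.dropLast) ↔ x ∈ p.support ∧ x ≠ u ∧ x ≠ v := by
  cases p with
  | nil => simp [SimpleGraph.Walk.support_nil]
  | @cons _ c _ h q =>
    have hsupp : (SimpleGraph.Walk.cons h q).support = u :: q.support := by simp
    have hne : q.support ≠ [] := q.support_ne_nil
    have hlast : q.support.getLast hne = v := q.getLast_support
    have hq : q.support = q.support.dropLast ++ [v] := by
      conv_lhs => rw [← List.dropLast_append_getLast hne]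
      rw [hlast]
    rw [hsupp] at hp ⊢
    have hu : u ∉ q.support := (List.nodup_cons.mp hp).1
    have hnodup : q.support.Nodup := (List.nodup_cons.mp hp).2
    have hv : v ∉ q.support.dropLast := by
      intro hmem
      have := hq ▸ hnodup
      exact (List.disjoint_of_nodup_append this) hmem (by simp)
    constructor
    · intro hx
      simp only [List.tail_cons] at hx
      have hxq : x ∈ q.support := List.dropLast_subset _ hx
      exact ⟨List.mem_cons_of_mem _ hxq, fun h' => hu (h' ▸ hxq),
        fun h' => hv (h' ▸ hx)⟩
    · rintro ⟨hx, hxu, hxv⟩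
      simp only [List.tail_cons]
      rcases List.mem_cons.mp hx with rfl | hx
      · exact absurd rfl hxu
      · rw [hq] at hx
        rcases List.mem_append.mp hx with h' | h'
        · exact h'
        · simp at h'; exact absurd h' hxv

/-- Split a walk starting outside X and ending in X at the first vertex in X. -/
lemma split_first : ∀ {c v : V} (p : G.Walk c v), c ∉ X → v ∈ X →
    ∃ (b : V) (w₂ : G.Walk c b) (w₃ : G.Walk b v), b ∈ X ∧ p = w₂.append w₃ ∧
      1 ≤ w₂.length ∧ ∀ x ∈ w₂.support.dropLast, x ∉ X := by
  intro c v p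
  induction p with
  | nil => intro hc hv; exact absurd hv hc
  | @cons c d v h q ih =>
    intro hc hv
    by_cases hd : d ∈ X
    · refine ⟨d, SimpleGraph.Walk.cons h SimpleGraph.Walk.nil, q, hd, ?_, by simp, ?_⟩
      · rw [SimpleGraph.Walk.cons_append, SimpleGraph.Walk.nil_append]
      · intro x hx
        simp only [SimpleGraph.Walk.support_cons, SimpleGraph.Walk.support_nil,
          List.dropLast_cons₂, List.dropLast_singleton, List.mem_singleton] at hx
        subst hx; exact hc
    · obtain ⟨b, w₂, w₃, hb, heq, hlen, hint⟩ := ih hd hv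
      refine ⟨b, SimpleGraph.Walk.cons h w₂, w₃, hb, ?_, by simp, ?_⟩
      · rw [SimpleGraph.Walk.cons_append, heq]
      · intro x hx
        have hw2 : w₂.support ≠ [] := w₂.support_ne_nil
        rw [SimpleGraph.Walk.support_cons, List.dropLast_cons_of_ne_nil hw2] at hx
        rcases List.mem_cons.mp hx with rfl | hx
        · exact hc
        · exact hint x hx

/-- Main projection lemma. -/
lemma project : ∀ (n : ℕ) {a v : V} (p : G.Walk a v), p.length ≤ n → p.IsPath →
    a ∈ X → v ∈ X →
    (∀ (a' b : V) (w₁ : G.Walk a a') (w₂ : G.Walk a' b) (w₃ : G.Walk b v),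
      p = w₁.append (w₂.append w₃) → 1 ≤ w₂.length → a' ∈ X → b ∈ X → a' ≠ b →
      (∀ x ∈ Internal w₂, x ∉ X) → Fstar.Adj a' b) →
    ∃ q : (addEdges G X Fstar).Walk a v, q.support.Sublist p.support := by
  intro n
  induction n with
  | zero =>
    intro a v p hlen _ _ _ _
    have : p.length = 0 := Nat.le_zero.mp hlen
    cases p with
    | nil => exact ⟨SimpleGraph.Walk.nil, by simp⟩
    | cons h q => simp at this
  | succ m ih =>
    intro a v p hlen hpath ha hv Hseg
    cases p with
    | nil => exact ⟨SimpleGraph.Walk.nil, by simp⟩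
    | @cons a c v h p' =>
      have hlen' : p'.length ≤ m := by
        simpa [SimpleGraph.Walk.length_cons] using hlen
      have hp' : p'.IsPath := hpath.of_cons
      have hanotin : a ∉ p'.support := by
        have := hpath
        rw [SimpleGraph.Walk.cons_isPath_iff] at this
        exact this.2
      by_cases hc : c ∈ X
      · obtain ⟨q', hq'⟩ := ih p' hlen' hp' hc hv (by
          intro a' b w₁ w₂ w₃ heq h1 ha' hb hne hint
          exact Hseg a' b (SimpleGraph.Walk.cons h w₁) w₂ w₃
            (by rw [SimpleGraph.Walk.cons_append, heq]) h1 ha' hb hne hint)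
        refine ⟨SimpleGraph.Walk.cons (Or.inl ⟨h, ha, hc⟩) q', ?_⟩
        rw [SimpleGraph.Walk.support_cons]
        exact List.Sublist.cons₂ a hq'
      · obtain ⟨b, w₂', w₃, hb, heq, _, hint⟩ := split_first p' hc hv
        have hbmem : b ∈ p'.support := by
          rw [heq, SimpleGraph.Walk.mem_support_append_iff]
          exact Or.inl w₂'.end_mem_support
        have hab : a ≠ b := fun h' => hanotin (h' ▸ hbmem)
        have hfadj : Fstar.Adj a b := by
          apply Hseg a b SimpleGraph.Walk.nil (SimpleGraph.Walk.cons h w₂') w₃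
          · rw [SimpleGraph.Walk.nil_append, SimpleGraph.Walk.cons_append, heq]
          · simp
          · exact ha
          · exact hb
          · exact hab
          · intro x hx
            unfold Internal at hx
            simp only [SimpleGraph.Walk.support_cons, List.tail_cons] at hx
            exact hint x hx
        have hw3len : w₃.length ≤ m := by
          have : p'.length = w₂'.length + w₃.length := by
            rw [heq, SimpleGraph.Walk.length_append]
          omega
        have hw3path : w₃.IsPath := by
          rw [heq] at hp'; exact hp'.of_append_right
        obtain ⟨q₃, hq₃⟩ := ih w₃ hw3len hw3path hb hv (by
          intro a' b' w₁ u₂ u₃ heq' h1 ha' hb' hne hint'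
          refine Hseg a' b'
            ((SimpleGraph.Walk.cons h w₂').append w₁) u₂ u₃ ?_ h1 ha' hb' hne hint'
          simp [heq, heq', SimpleGraph.Walk.cons_append, SimpleGraph.Walk.append_assoc])
        refine ⟨SimpleGraph.Walk.cons (Or.inr hfadj) q₃, ?_⟩
        have h1 : q₃.support.Sublist (w₃.support) := hq₃
        have h2 : w₃.support.Sublist p'.support := by
          rw [heq, SimpleGraph.Walk.support_append]
          have : w₃.support = [b] ++ w₃.support.tail := by
            cases w₃ <;> simp
          rw [this]
          exact List.Sublist.append (by simpa using w₂'.end_mem_support)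
            (List.Sublist.refl _)
        rw [SimpleGraph.Walk.support_cons]
        exact List.Sublist.cons₂ a (h1.trans h2)

end Aux

/-- projecting internally disjoint paths onto one side of a separation,
replacing excursions through the other side by edges of the auxiliary graph F*. -/
theorem stmt17 {V : Type*} (G : SimpleGraph V) (k : ℕ) (s t : Fin k → V)
    (P : ∀ i, G.Walk (s i) (t i)) (hP : ∀ i, (P i).IsPath)
    (hdisj : ∀ i j, i ≠ j → IntDisjoint (P i) (P j))
    (X : Set V) (S : Separation G) (hA : S.A = X)
    (Fstar : SimpleGraph V)
    (hFroot : ∀ a b, Fstar.Adj a b → a ∈ S.A ∩ S.B ∧ b ∈ S.A ∩ S.B)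
    (hFseg : ∀ (i : Fin k) (a b : V) (w₁ : G.Walk (s i) a) (w₂ : G.Walk a b)
      (w₃ : G.Walk b (t i)),
      P i = w₁.append (w₂.append w₃) → 1 ≤ w₂.length → a ∈ X → b ∈ X → a ≠ b →
      (∀ x ∈ Internal w₂, x ∉ X) → Fstar.Adj a b) :
    ∃ Q : ∀ i : {i : Fin k // s i ∈ X ∧ t i ∈ X},
        (addEdges G X Fstar).Walk (s i.1) (t i.1),
      (∀ i, (Q i).IsPath ∧ (Q i).support ⊆ (P i.1).support) ∧
      ∀ i j, i ≠ j → IntDisjoint (Q i) (Q j) := by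
  have key : ∀ i : {i : Fin k // s i ∈ X ∧ t i ∈ X},
      ∃ q : (addEdges G X Fstar).Walk (s i.1) (t i.1),
        q.support.Sublist (P i.1).support := by
    intro i
    exact project (P i.1).length (P i.1) le_rfl (hP i.1) i.2.1 i.2.2
      (fun a b w₁ w₂ w₃ heq h1 ha hb hne hint =>
        hFseg i.1 a b w₁ w₂ w₃ heq h1 ha hb hne hint)
  choose Q hQ using key
  have hnodup : ∀ i, (Q i).support.Nodup := fun i =>
    (hQ i).nodup ((hP i.1).2)
  have hsub : ∀ i, (Q i).support ⊆ (P i.1).support := fun i => (hQ i).subset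
  refine ⟨Q, fun i => ⟨(SimpleGraph.Walk.isPath_def _).mpr (hnodup i), hsub i⟩, ?_⟩
  intro i j hij
  have hij' : i.1 ≠ j.1 := fun h => hij (Subtype.ext h)
  have hPd := hdisj i.1 j.1 hij'
  have hint : ∀ {l₁ l₂ : {l : Fin k // s l ∈ X ∧ t l ∈ X}},
      ∀ x ∈ Internal (Q l₁), x ∈ Internal (P l₁.1) := by
    intro l₁ l₂ x hx
    have h1 := (mem_internal_iff (hnodup l₁)).mp hx
    exact (mem_internal_iff ((hP l₁.1).2)).mpr ⟨hsub l₁ h1.1, h1.2.1, h1.2.2⟩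
  constructor
  · intro x hx hxint
    exact hPd.1 x (hsub i hx) (hint (l₂ := i) x hxint)
  · intro x hx hxint
    exact hPd.2 x (hsub j hx) (hint (l₂ := j) x hxint)
end
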